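/- Assume the Notation 3.2 setup. Let n ≥ 1 be a natural number with binary expansion n = 2^{i_1} + ⋯ + 2^{i_d} where i_1 < i_2 < ⋯ < i_d, and let m be such that 2^m ≤ n < 2^{m+1}. Define L(n) = {a ∈ A(n) : a·A(2^{m+1}−n) ⊆ U(2^{m+1})}. Then V(2^{i_d})V(2^{i_{d−1}})⋯V(2^{i_1}) + L(n) = A(n). -/

import Mathlib

open Module

noncomputable section

/-- The free associative algebra `K⟨x,y⟩` on two generators. -/
abbrev FA (K : Type*) [Field K] := FreeAlgebra K (Fin 2)

/-- The element of `K⟨x,y⟩` given by a word (a list of letters). -/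
def wordOf (K : Type*) [Field K] (l : List (Fin 2)) : FA K :=
  (l.map (FreeAlgebra.ι K)).prod

/-- `a` is a word of length `n` over the two generators. -/
def IsWord (K : Type*) [Field K] (n : ℕ) (a : FA K) : Prop :=
  ∃ l : List (Fin 2), l.length = n ∧ a = wordOf K l

/-- `A(n)`: the span of all words of length `n`. -/
def Aspan (K : Type*) [Field K] (n : ℕ) : Submodule K (FA K) :=
  Submodule.span K {a | IsWord K n a}

/-- The set `T = ∪_{i ≥ 1} {f(i)-g(i)-1, …, f(i)-1}`. -/
def Tset (f g : ℕ → ℕ) : Set ℕ :=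
  {n | ∃ i, 1 ≤ i ∧ f i ≤ n + g i + 1 ∧ n + 1 ≤ f i}

/-- The data and conditions of Notation 3.2 (with the subspaces `U(2^n)`, `V(2^n)`
satisfying conditions (1)–(8) of Proposition 3.1). Here `U n` and `V n` denote the
subspaces `U(2^n)` and `V(2^n)` of `A(2^n)`. -/
structure LSYSetup (K : Type*) [Field K] where
  f : ℕ → ℕ
  g : ℕ → ℕ
  W : ℕ → Submodule K (FA K)
  U : ℕ → Submodule K (FA K)
  V : ℕ → Submodule K (FA K)
  /-- `f(i-1) < f(i) - g(i) - 1` for all `i ≥ 1` -/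
  hf : ∀ i, 1 ≤ i → f (i - 1) + g i + 1 < f i
  /-- `W_i ⊆ A(2^{f(i)})` -/
  hW_le : ∀ i, 1 ≤ i → W i ≤ Aspan K (2 ^ f i)
  /-- `dim W_i ≤ 2^{2^{g(i)}} - 2` -/
  hW_dim : ∀ i, 1 ≤ i → finrank K (W i) ≤ 2 ^ 2 ^ g i - 2
  hU_le : ∀ n, U n ≤ Aspan K (2 ^ n)
  hV_le : ∀ n, V n ≤ Aspan K (2 ^ n)
  /-- (1) `U(2^n) ⊕ V(2^n) = A(2^n)` -/
  h_disj : ∀ n, Disjoint (U n) (V n)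
  h_sup : ∀ n, U n ⊔ V n = Aspan K (2 ^ n)
  /-- (2) `dim V(2^n) = 2` whenever `n ∉ T` -/
  h_dimV : ∀ n, n ∉ Tset f g → finrank K (V n) = 2
  /-- (3) `dim V(2^{n+j}) = 2^{2^j}` whenever `n = f(i)-g(i)-1` and `0 ≤ j ≤ g(i)` -/
  h_dimV' : ∀ i j n, 1 ≤ i → n + g i + 1 = f i → j ≤ g i →
      finrank K (V (n + j)) = 2 ^ 2 ^ j
  /-- (4) `V(2^n)` has a basis consisting of words -/
  h_basis : ∀ n, ∃ s : Set (FA K), (∀ w ∈ s, IsWord K (2 ^ n) w) ∧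
      LinearIndependent K ((↑) : s → FA K) ∧ Submodule.span K s = V n
  /-- (5) `W_i ⊆ U(2^{f(i)})` -/
  hWU : ∀ i, 1 ≤ i → W i ≤ U (f i)
  /-- (6) `A(2^n)U(2^n) + U(2^n)A(2^n) ⊆ U(2^{n+1})` -/
  hU_mul : ∀ n, Aspan K (2 ^ n) * U n ⊔ U n * Aspan K (2 ^ n) ≤ U (n + 1)
  /-- (7) `V(2^{n+1}) ⊆ V(2^n)V(2^n)` -/
  hV_mul : ∀ n, V (n + 1) ≤ V n * V n
  /-- (8) if `n ∉ T` then some word `w ∈ V(2^n)` has `w·A(2^n) ⊆ U(2^{n+1})` -/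
  h_word : ∀ n, n ∉ Tset f g → ∃ w, IsWord K (2 ^ n) w ∧ w ∈ V n ∧
      ∀ a ∈ Aspan K (2 ^ n), w * a ∈ U (n + 1)

variable {K : Type*} [Field K]

/-- `R(n) = {a ∈ A(n) : A(2^{m+1}-n)·a ⊆ U(2^{m+1})}`. -/
def Rspace (S : LSYSetup K) (n m : ℕ) : Submodule K (FA K) where
  carrier := {a | a ∈ Aspan K n ∧ ∀ b ∈ Aspan K (2 ^ (m + 1) - n), b * a ∈ S.U (m + 1)}
  add_mem' := by
    rintro a b ⟨ha1, ha2⟩ ⟨hb1, hb2⟩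
    exact ⟨add_mem ha1 hb1, fun c hc => by
      rw [mul_add]; exact add_mem (ha2 c hc) (hb2 c hc)⟩
  zero_mem' := ⟨zero_mem _, fun c hc => by rw [mul_zero]; exact zero_mem _⟩
  smul_mem' := by
    rintro k a ⟨ha1, ha2⟩
    exact ⟨Submodule.smul_mem _ k ha1, fun c hc => by
      rw [mul_smul_comm]; exact Submodule.smul_mem _ _ (ha2 c hc)⟩

/-- `L(n) = {a ∈ A(n) : a·A(2^{m+1}-n) ⊆ U(2^{m+1})}`. -/
def Lspace (S : LSYSetup K) (n m : ℕ) : Submodule K (FA K) where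
  carrier := {a | a ∈ Aspan K n ∧ ∀ b ∈ Aspan K (2 ^ (m + 1) - n), a * b ∈ S.U (m + 1)}
  add_mem' := by
    rintro a b ⟨ha1, ha2⟩ ⟨hb1, hb2⟩
    exact ⟨add_mem ha1 hb1, fun c hc => by
      rw [add_mul]; exact add_mem (ha2 c hc) (hb2 c hc)⟩
  zero_mem' := ⟨zero_mem _, fun c hc => by rw [zero_mul]; exact zero_mem _⟩
  smul_mem' := by
    rintro k a ⟨ha1, ha2⟩
    exact ⟨Submodule.smul_mem _ k ha1, fun c hc => by
      rw [smul_mul_assoc]; exact Submodule.smul_mem _ _ (ha2 c hc)⟩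

/-- `I(n) = {a ∈ A(n) : A(j)·a·A(2^{m+2}-j-n) ⊆ U(2^{m+1})A(2^{m+1}) + A(2^{m+1})U(2^{m+1})`
for all `0 ≤ j ≤ 2^{m+2}-n}`, where `2^m ≤ n < 2^{m+1}` (i.e. `m = Nat.log 2 n`). -/
def Ispace (S : LSYSetup K) (n : ℕ) : Submodule K (FA K) where
  carrier := {a | a ∈ Aspan K n ∧ ∀ j ≤ 2 ^ (Nat.log 2 n + 2) - n,
      ∀ b ∈ Aspan K j, ∀ c ∈ Aspan K (2 ^ (Nat.log 2 n + 2) - j - n),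
      b * a * c ∈ S.U (Nat.log 2 n + 1) * Aspan K (2 ^ (Nat.log 2 n + 1)) ⊔
        Aspan K (2 ^ (Nat.log 2 n + 1)) * S.U (Nat.log 2 n + 1)}
  add_mem' := by
    rintro a b ⟨ha1, ha2⟩ ⟨hb1, hb2⟩
    refine ⟨add_mem ha1 hb1, fun j hj c hc d hd => ?_⟩
    rw [mul_add, add_mul]
    exact add_mem (ha2 j hj c hc d hd) (hb2 j hj c hc d hd)
  zero_mem' := ⟨zero_mem _, fun j hj c hc d hd => by
    rw [mul_zero, zero_mul]; exact zero_mem _⟩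
  smul_mem' := by
    rintro k a ⟨ha1, ha2⟩
    refine ⟨Submodule.smul_mem _ k ha1, fun j hj c hc d hd => ?_⟩
    rw [mul_smul_comm, smul_mul_assoc]
    exact Submodule.smul_mem _ _ (ha2 j hj c hc d hd)


lemma wordOf_append (l₁ l₂ : List (Fin 2)) :
    wordOf K (l₁ ++ l₂) = wordOf K l₁ * wordOf K l₂ := by
  simp [wordOf]

lemma Aspan_mul (a b : ℕ) : Aspan K a * Aspan K b = Aspan K (a + b) := by
  rw [Aspan, Aspan, Aspan, Submodule.span_mul_span]
  congr 1
  ext z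
  constructor
  · intro hz
    rw [Set.mem_mul] at hz
    obtain ⟨x, ⟨l1, hl1, rfl⟩, y, ⟨l2, hl2, rfl⟩, rfl⟩ := hz
    exact ⟨l1 ++ l2, by simp [hl1, hl2], (wordOf_append l1 l2).symm⟩
  · rintro ⟨l, hl, rfl⟩
    refine Set.mem_mul.2 ⟨wordOf K (l.take a), ⟨l.take a, ?_, rfl⟩,
      wordOf K (l.drop a), ⟨l.drop a, ?_, rfl⟩, ?_⟩
    · simp [hl]
    · simp [hl]
    · rw [← wordOf_append, List.take_append_drop]

lemma sum_lt_two_pow : ∀ (L : List ℕ) (b : ℕ), L.Pairwise (· < ·) →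
    (∀ x ∈ L, x < b) → (L.map (2 ^ ·)).sum < 2 ^ b := by
  intro L
  induction L using List.reverseRecOn with
  | nil => intro b _ _; simpa using Nat.pow_pos (n := b) (by norm_num : 0 < 2)
  | append_singleton L' a ih =>
    intro b hs hb
    obtain ⟨h1, _, h2⟩ := List.pairwise_append.mp hs
    have ha : a < b := hb a (by simp)
    have h3 := ih a h1 (fun x hx => h2 x hx a (by simp))
    have h4 : 2 ^ (a + 1) ≤ 2 ^ b := Nat.pow_le_pow_right (by norm_num) ha
    have h5 : (2 : ℕ) ^ (a + 1) = 2 ^ a * 2 := pow_succ 2 a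
    simp only [List.map_append, List.sum_append, List.map_cons, List.map_nil,
      List.sum_cons, List.sum_nil]
    omega

lemma mem_Lspace {S : LSYSetup K} {n m : ℕ} {x : FA K} :
    x ∈ Lspace S n m ↔ x ∈ Aspan K n ∧
      ∀ b ∈ Aspan K (2 ^ (m + 1) - n), x * b ∈ S.U (m + 1) := Iff.rfl

lemma Lspace_mul (S : LSYSetup K) (n' m' : ℕ) (hn' : n' < 2 ^ (m' + 1)) :
    ∀ k, m' + 1 ≤ k → ∀ b ∈ Lspace S n' m', ∀ c ∈ Aspan K (2 ^ k - n'),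
      b * c ∈ S.U k := by
  intro k hk
  induction k, hk using Nat.le_induction with
  | base => exact fun b hb c hc => hb.2 c hc
  | succ k hk ih =>
    intro b hb c hc
    have h2 : (2 : ℕ) ^ (m' + 1) ≤ 2 ^ k := Nat.pow_le_pow_right (by norm_num) hk
    have h3 : (2 : ℕ) ^ (k + 1) = 2 ^ k * 2 := pow_succ 2 k
    have hsplit : 2 ^ (k + 1) - n' = (2 ^ k - n') + 2 ^ k := by omega
    rw [hsplit, ← Aspan_mul] at hc
    have hle : Aspan K (2 ^ k - n') * Aspan K (2 ^ k) ≤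
        Submodule.comap (LinearMap.mulLeft K b) (S.U (k + 1)) := by
      refine Submodule.mul_le.2 fun x hx y hy => ?_
      simp only [Submodule.mem_comap, LinearMap.mulLeft_apply]
      rw [← mul_assoc]
      exact (le_sup_right.trans (S.hU_mul k))
        (Submodule.mul_mem_mul (ih b hb x hx) hy)
    exact hle hc

/-- **Lemma 3.3 (second part).** If `n ≥ 1` has binary expansion `2^{i₁} + ⋯ + 2^{i_d}`
with `i₁ < ⋯ < i_d` and `2^m ≤ n < 2^{m+1}`, then
`V(2^{i_d})V(2^{i_{d-1}})⋯V(2^{i₁}) + L(n) = A(n)`. -/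
theorem lemma_3_3_L (S : LSYSetup K) (n : ℕ) (hn : 1 ≤ n)
    (L : List ℕ) (hL : L.Pairwise (· < ·)) (hsum : (L.map (2 ^ ·)).sum = n)
    (m : ℕ) (hm₁ : 2 ^ m ≤ n) (hm₂ : n < 2 ^ (m + 1)) :
    (L.reverse.map S.V).prod ⊔ Lspace S n m = Aspan K n := by
  induction L using List.reverseRecOn generalizing n m with
  | nil => simp at hsum; omega
  | append_singleton L' a ih =>
    obtain ⟨hL's, -, hlt⟩ := List.pairwise_append.mp hL
    have hlt' : ∀ x ∈ L', x < a := fun x hx => hlt x hx a (by simp)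
    set n' : ℕ := (L'.map (2 ^ ·)).sum with hn'def
    have hsum' : n' + 2 ^ a = n := by
      simpa [List.map_append] using hsum
    have hn'lt : n' < 2 ^ a := sum_lt_two_pow L' a hL's hlt'
    have hpa : (2 : ℕ) ^ (a + 1) = 2 ^ a * 2 := pow_succ 2 a
    have hpm : (2 : ℕ) ^ (m + 1) = 2 ^ m * 2 := pow_succ 2 m
    have hma : m = a := by
      have h1 : Nat.log 2 n = m := Nat.log_eq_of_pow_le_of_lt_pow hm₁ hm₂
      have h2 : Nat.log 2 n = a := Nat.log_eq_of_pow_le_of_lt_pow (by omega) (by omega)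
      omega
    subst hma
    have hprod : ((L' ++ [m]).reverse.map S.V).prod =
        S.V m * (L'.reverse.map S.V).prod := by
      simp
    rw [hprod]
    have hLle : Lspace S n m ≤ Aspan K n := fun x hx => hx.1
    have hAn : Aspan K (2 ^ m) * Aspan K n' = Aspan K n := by
      rw [Aspan_mul]; congr 1; omega
    have hsub : 2 ^ (m + 1) - n = 2 ^ m - n' := by omega
    rcases Nat.eq_zero_or_pos n' with h0 | h0
    · -- base case: n = 2^m, L' = []
      have hL'nil : L' = [] := by
        cases L' with
        | nil => rfl
        | cons x xs =>
          exfalso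
          have hx : 0 < 2 ^ x := Nat.pow_pos (n := x) (by norm_num : 0 < 2)
          have : 2 ^ x + ((xs.map (2 ^ ·)).sum) = n' := by
            simp [hn'def]
          omega
      subst hL'nil
      have hn2 : n = 2 ^ m := by omega
      subst hn2
      simp only [List.reverse_nil, List.map_nil, List.prod_nil, mul_one]
      have hUL : S.U m ≤ Lspace S (2 ^ m) m := by
        intro x hx
        refine ⟨S.hU_le m hx, fun c hc => ?_⟩
        rw [show 2 ^ (m + 1) - 2 ^ m = 2 ^ m from by omega] at hc
        exact (le_sup_right.trans (S.hU_mul m)) (Submodule.mul_mem_mul hx hc)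
      refine le_antisymm (sup_le (S.hV_le m) hLle) ?_
      rw [← S.h_sup m]
      exact sup_le (hUL.trans le_sup_right) le_sup_left
    · -- inductive case
      set m' : ℕ := Nat.log 2 n' with hm'def
      have hm'1 : 2 ^ m' ≤ n' := Nat.pow_log_le_self 2 (by omega)
      have hm'2 : n' < 2 ^ (m' + 1) := Nat.lt_pow_succ_log_self (by norm_num) n'
      have hm'm : m' + 1 ≤ m := Nat.log_lt_of_lt_pow (by omega) hn'lt
      have IH := ih n' h0 hL's hn'def.symm m' hm'1 hm'2
      have hAm : Aspan K n' * Aspan K (2 ^ m - n') = Aspan K (2 ^ m) := by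
        rw [Aspan_mul]; congr 1; omega
      -- Claim 1 : U m * A(n') ≤ Lspace S n m
      have claim1 : S.U m * Aspan K n' ≤ Lspace S n m := by
        refine Submodule.mul_le.2 fun x hx y hy => ?_
        refine ⟨hAn ▸ Submodule.mul_mem_mul (S.hU_le m hx) hy, fun c hc => ?_⟩
        rw [hsub] at hc
        rw [mul_assoc]
        have hyc : y * c ∈ Aspan K (2 ^ m) := hAm ▸ Submodule.mul_mem_mul hy hc
        exact (le_sup_right.trans (S.hU_mul m)) (Submodule.mul_mem_mul hx hyc)
      -- Claim 2 : V m * Lspace S n' m' ≤ Lspace S n m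
      have claim2 : S.V m * Lspace S n' m' ≤ Lspace S n m := by
        refine Submodule.mul_le.2 fun x hx y hy => ?_
        refine ⟨hAn ▸ Submodule.mul_mem_mul (S.hV_le m hx) hy.1, fun c hc => ?_⟩
        rw [hsub] at hc
        rw [mul_assoc]
        have hyc : y * c ∈ S.U m := Lspace_mul S n' m' hm'2 m hm'm y hy c hc
        exact (le_sup_left.trans (S.hU_mul m)) (Submodule.mul_mem_mul (S.hV_le m hx) hyc)
      refine le_antisymm (sup_le ?_ hLle) ?_
      · exact (mul_le_mul' (S.hV_le m) (le_sup_left.trans IH.le)).trans hAn.le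
      · rw [← hAn, ← S.h_sup m, Submodule.sup_mul]
        refine sup_le (claim1.trans le_sup_right) ?_
        rw [← IH, Submodule.mul_sup]
        exact sup_le le_sup_left (claim2.trans le_sup_right)

end
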